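/- Let B be a unital C*-algebra with isomorphism ψ : B → Mₙ ⊗ B, ψ(1) = Iₙ ⊗ 1, and A a maximal abelian *-subalgebra with σ₁(A) ⊆ A (σ₁ the shift ψ⁻¹(Iₙ ⊗ ·)). Then ψ(A) ⊆ Mₙ ⊗ A, and more generally the iterated isomorphism ψ_m : B → Mₙ^{⊗m} ⊗ B satisfies ψ_m(A) ⊆ Mₙ^{⊗m} ⊗ A. -/

import Mathlib

section Aux

variable {n : ℕ} {B : Type} [Ring B] [Algebra ℂ B]

/-- slice map -/
noncomputable def sliceMap (i j : Fin n) :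
    TensorProduct ℂ (Matrix (Fin n) (Fin n) ℂ) B →ₗ[ℂ] B :=
  TensorProduct.lift
    { toFun := fun M => M i j • (LinearMap.id : B →ₗ[ℂ] B)
      map_add' := fun M N => by simp [Matrix.add_apply, add_smul]
      map_smul' := fun c M => by simp [Matrix.smul_apply, mul_smul]
      }

@[simp] lemma sliceMap_tmul (i j : Fin n) (M : Matrix (Fin n) (Fin n) ℂ) (b : B) :
    sliceMap i j (M ⊗ₜ[ℂ] b) = M i j • b := by
  simp [sliceMap]

lemma sliceMap_mul_right (i j : Fin n) (x : TensorProduct ℂ (Matrix (Fin n) (Fin n) ℂ) B)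
    (a : B) : sliceMap i j (x * (1 : Matrix (Fin n) (Fin n) ℂ) ⊗ₜ[ℂ] a) = sliceMap i j x * a := by
  induction x using TensorProduct.induction_on with
  | zero => simp
  | tmul M b => simp [Algebra.TensorProduct.tmul_mul_tmul, smul_mul_assoc]
  | add x y hx hy => simp [add_mul, hx, hy]

lemma sliceMap_mul_left (i j : Fin n) (x : TensorProduct ℂ (Matrix (Fin n) (Fin n) ℂ) B)
    (a : B) : sliceMap i j ((1 : Matrix (Fin n) (Fin n) ℂ) ⊗ₜ[ℂ] a * x) = a * sliceMap i j x := by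
  induction x using TensorProduct.induction_on with
  | zero => simp
  | tmul M b => simp [Algebra.TensorProduct.tmul_mul_tmul, mul_smul_comm]
  | add x y hx hy => simp [mul_add, hx, hy]

lemma tensor_eq_sum_slices (x : TensorProduct ℂ (Matrix (Fin n) (Fin n) ℂ) B) :
    x = ∑ i : Fin n, ∑ j : Fin n,
      (Matrix.single i j (1:ℂ)) ⊗ₜ[ℂ] sliceMap i j x := by
  induction x using TensorProduct.induction_on with
  | zero => simp
  | tmul M b =>
      conv_lhs => rw [Matrix.matrix_eq_sum_single M]
      rw [TensorProduct.sum_tmul]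
      refine Finset.sum_congr rfl fun i _ => ?_
      rw [TensorProduct.sum_tmul]
      refine Finset.sum_congr rfl fun j _ => ?_
      rw [sliceMap_tmul, TensorProduct.tmul_smul, TensorProduct.smul_tmul',
        Matrix.smul_single, smul_eq_mul, mul_one]
  | add x y hx hy =>
      conv_lhs => rw [hx, hy]
      simp [TensorProduct.tmul_add, Finset.sum_add_distrib]

end Aux


/-- A bundled complex algebra. -/
structure CAlgBundle where
  carrier : Type
  ring : Ring carrier
  alg : Algebra ℂ carrier

attribute [instance] CAlgBundle.ring CAlgBundle.alg

/-- The iterated tensor powers `Mₙ^{⊗m} ⊗ B`, nested as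
`T 0 = B`, `T (m+1) = Mₙ ⊗ T m`. -/
noncomputable def tensorTower (n : ℕ) (B : Type) [Ring B] [Algebra ℂ B] : ℕ → CAlgBundle
  | 0 => ⟨B, inferInstance, inferInstance⟩
  | m + 1 => ⟨TensorProduct ℂ (Matrix (Fin n) (Fin n) ℂ) (tensorTower n B m).carrier,
      inferInstance, inferInstance⟩

/-- `id^{⊗m} ⊗ ψ : T m ≃ T (m+1)`. -/
noncomputable def tensorStep (n : ℕ) (B : Type) [Ring B] [Algebra ℂ B]
    (ψ : B ≃ₐ[ℂ] TensorProduct ℂ (Matrix (Fin n) (Fin n) ℂ) B) :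
    ∀ m : ℕ, (tensorTower n B m).carrier ≃ₐ[ℂ] (tensorTower n B (m + 1)).carrier
  | 0 => ψ
  | m + 1 => Algebra.TensorProduct.congr AlgEquiv.refl (tensorStep n B ψ m)

/-- The iterated isomorphism `ψ_m : B ≃ Mₙ^{⊗m} ⊗ B`, with `ψ₀ = id` and
`ψ_{m+1} = (id^{⊗m} ⊗ ψ) ∘ ψ_m`. -/
noncomputable def psiIter (n : ℕ) (B : Type) [Ring B] [Algebra ℂ B]
    (ψ : B ≃ₐ[ℂ] TensorProduct ℂ (Matrix (Fin n) (Fin n) ℂ) B) :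
    ∀ m : ℕ, B ≃ₐ[ℂ] (tensorTower n B m).carrier
  | 0 => AlgEquiv.refl
  | m + 1 => (psiIter n B ψ m).trans (tensorStep n B ψ m)

/-- The subalgebra `Mₙ^{⊗m} ⊗ A` of `T m`. -/
noncomputable def tensorSub (n : ℕ) (B : Type) [Ring B] [Algebra ℂ B]
    (A : Subalgebra ℂ B) : ∀ m : ℕ, Subalgebra ℂ (tensorTower n B m).carrier
  | 0 => A
  | m + 1 => (Algebra.TensorProduct.map (AlgHom.id ℂ (Matrix (Fin n) (Fin n) ℂ))
      (tensorSub n B A m).val).range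

set_option maxHeartbeats 1000000 in
set_option synthInstance.maxHeartbeats 400000 in
/-- If `A` is a maximal abelian *-subalgebra of `B` invariant under the shift
`σ₁ = ψ⁻¹ ∘ (Iₙ ⊗ ·)`, then `ψ(A) ⊆ Mₙ ⊗ A`, and more generally
`ψ_m(A) ⊆ Mₙ^{⊗m} ⊗ A` for every `m`. -/
theorem psiIter_maps_into_tensor_sub (n : ℕ) (B : Type) [CStarAlgebra B]
    (ψ : B ≃ₐ[ℂ] TensorProduct ℂ (Matrix (Fin n) (Fin n) ℂ) B)
    (A : Subalgebra ℂ B)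
    (hstar : ∀ a ∈ A, star a ∈ A)
    (hab : ∀ a ∈ A, ∀ a' ∈ A, a * a' = a' * a)
    (hmaxab : ∀ b : B, (∀ a ∈ A, a * b = b * a) → b ∈ A)
    (hshift : ∀ a ∈ A, ψ.symm (Algebra.TensorProduct.includeRight (R := ℂ)
        (A := Matrix (Fin n) (Fin n) ℂ) a) ∈ A) :
    ∀ m : ℕ, ∀ a ∈ A, psiIter n B ψ m a ∈ tensorSub n B A m := by

  classical
  have hslice : ∀ a ∈ A, ∀ i j : Fin n, sliceMap i j (ψ a) ∈ A := by
    intro a ha i j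
    apply hmaxab
    intro a' ha'
    have hc := hshift a' ha'
    have hcomm : ψ a * ((1 : Matrix (Fin n) (Fin n) ℂ) ⊗ₜ[ℂ] a')
        = ((1 : Matrix (Fin n) (Fin n) ℂ) ⊗ₜ[ℂ] a') * ψ a := by
      have h2 := congrArg ψ (hab a ha _ hc)
      simpa [map_mul, Algebra.TensorProduct.includeRight_apply] using h2
    calc a' * sliceMap i j (ψ a)
        = sliceMap i j (((1 : Matrix (Fin n) (Fin n) ℂ) ⊗ₜ[ℂ] a') * ψ a) :=
          (sliceMap_mul_left i j (ψ a) a').symm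
      _ = sliceMap i j (ψ a * ((1 : Matrix (Fin n) (Fin n) ℂ) ⊗ₜ[ℂ] a')) := by rw [← hcomm]
      _ = sliceMap i j (ψ a) * a' := sliceMap_mul_right i j (ψ a) a'
  have hpsi : ∀ a ∈ A, ψ a ∈ (Algebra.TensorProduct.map
      (AlgHom.id ℂ (Matrix (Fin n) (Fin n) ℂ)) A.val).range := by
    intro a ha
    rw [tensor_eq_sum_slices (ψ a)]
    refine Subalgebra.sum_mem _ fun i _ => Subalgebra.sum_mem _ fun j _ => ?_
    exact ⟨Matrix.single i j (1:ℂ) ⊗ₜ[ℂ] ⟨sliceMap i j (ψ a), hslice a ha i j⟩, by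
      simp [Algebra.TensorProduct.map_tmul]⟩
  have hstep : ∀ m : ℕ, ∀ x : (tensorTower n B m).carrier,
      x ∈ tensorSub n B A m → tensorStep n B ψ m x ∈ tensorSub n B A (m + 1) := by
    intro m
    induction m with
    | zero => intro x hx; exact hpsi x hx
    | succ m ih =>
      intro x hx
      obtain ⟨y, rfl⟩ := hx
      induction y using TensorProduct.induction_on with
      | zero =>
        show tensorStep n B ψ (m+1) _ ∈ _
        rw [map_zero]
        have h0 := zero_mem (tensorSub n B A (m + 1 + 1))
        rw [← map_zero (tensorStep n B ψ (m + 1))] at h0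
        exact h0
      | tmul M s =>
        show tensorStep n B ψ (m+1)
          (Algebra.TensorProduct.map (AlgHom.id ℂ (Matrix (Fin n) (Fin n) ℂ))
            (tensorSub n B A m).val (M ⊗ₜ[ℂ] s)) ∈ _
        rw [Algebra.TensorProduct.map_tmul]
        show Algebra.TensorProduct.congr AlgEquiv.refl (tensorStep n B ψ m)
          (M ⊗ₜ[ℂ] (s : (tensorTower n B m).carrier)) ∈ _
        rw [Algebra.TensorProduct.congr_apply, Algebra.TensorProduct.map_tmul]
        exact ⟨M ⊗ₜ[ℂ] ⟨tensorStep n B ψ m s, ih s s.2⟩, by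
          simp [Algebra.TensorProduct.map_tmul]⟩
      | add y z hy hz =>
        show tensorStep n B ψ (m+1) _ ∈ _
        rw [map_add]
        have h1 := add_mem hy hz
        convert h1 using 1
        exact map_add (tensorStep n B ψ (m + 1)) _ _
  intro m
  induction m with
  | zero => intro a ha; exact ha
  | succ m ih =>
    intro a ha
    exact hstep m (psiIter n B ψ m a) (ih a ha)
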